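/- If a is a regular scale factor with a finite particle horizon, i.e. ∫_0^τ dt/a(t) < ∞ for some τ > 0, then lim_{t→0⁺} t/a(t) = 0 and lim_{t→0⁺} 1/a'(t) = 0. -/

import Mathlib

open Set MeasureTheory Filter intervalIntegral

/-- If a regular scale factor has a finite particle horizon, then `t / a t → 0`
and `1 / a' t → 0` as `t → 0⁺`. -/
theorem finite_particle_horizon_limits (a : ℝ → ℝ)
    (ha0 : a 0 = 0)
    (hmono : StrictMonoOn a (Set.Ici 0))
    (hcont : ContinuousOn a (Set.Ici 0))
    (hsmooth : ContDiffOn ℝ 2 a (Set.Ioi 0))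
    (hreg : ∀ t > (0:ℝ), a t * deriv (deriv a) t / (deriv a t) ^ 2 ≤ 1)
    (τ : ℝ) (hτ : 0 < τ)
    (hpart : MeasureTheory.IntegrableOn (fun t => 1 / a t) (Set.Ioc 0 τ)) :
    Filter.Tendsto (fun t => t / a t) (nhdsWithin 0 (Set.Ioi 0)) (nhds 0) ∧
    Filter.Tendsto (fun t => 1 / deriv a t) (nhdsWithin 0 (Set.Ioi 0)) (nhds 0) := by
  -- positivity of `a`
  have hapos : ∀ t : ℝ, 0 < t → 0 < a t := by
    intro t ht
    have := hmono (Set.self_mem_Ici) (Set.mem_Ici.2 ht.le) ht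
    rwa [ha0] at this
  -- derivative facts
  have h1 : ContDiffOn ℝ 1 (deriv a) (Set.Ioi 0) :=
    hsmooth.deriv_of_isOpen isOpen_Ioi (by norm_num)
  have hda : ∀ t : ℝ, 0 < t → HasDerivAt a (deriv a t) t := fun t ht =>
    ((hsmooth.differentiableOn (by norm_num)).differentiableAt
      (isOpen_Ioi.mem_nhds ht)).hasDerivAt
  have hda2 : ∀ t : ℝ, 0 < t → HasDerivAt (deriv a) (deriv (deriv a) t) t := fun t ht =>
    ((h1.differentiableOn (by norm_num)).differentiableAt
      (isOpen_Ioi.mem_nhds ht)).hasDerivAt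
  have hcontd : ContinuousOn (deriv a) (Set.Ioi 0) := h1.continuousOn
  -- nonnegativity of the derivative
  have hdnn : ∀ t : ℝ, 0 < t → 0 ≤ deriv a t := by
    intro t ht
    have hd := (hasDerivAt_iff_tendsto_slope).1 (hda t ht)
    refine ge_of_tendsto hd ?_
    have hmem : Set.Ioi (0:ℝ) ∈ nhdsWithin t {t}ᶜ :=
      mem_nhdsWithin_of_mem_nhds (Ioi_mem_nhds ht)
    filter_upwards [hmem, self_mem_nhdsWithin] with u hu hune
    have hune' : u ≠ t := hune
    rw [slope_def_field]
    rcases lt_or_gt_of_ne hune' with h | h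
    · have : a u ≤ a t := (hmono (Set.mem_Ici.2 (le_of_lt hu)) (Set.mem_Ici.2 ht.le) h).le
      have h2 : u - t < 0 := by linarith
      rw [div_nonneg_iff]; right; constructor <;> linarith
    · have : a t ≤ a u := (hmono (Set.mem_Ici.2 ht.le) (Set.mem_Ici.2 (lt_trans ht h).le) h).le
      exact div_nonneg (by linarith) (by linarith)
  -- continuous inverse of `a`
  have hcinv : ContinuousOn (fun x => (a x)⁻¹) (Set.Ioi 0) :=
    (hcont.mono Ioi_subset_Ici_self).inv₀ fun u hu => (hapos u hu).ne'
  -- integrability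
  have hpart' : MeasureTheory.IntegrableOn (fun t => (a t)⁻¹) (Set.Ioc 0 τ) := by
    simpa [one_div] using hpart
  -- key monotonicity inequality
  have key : ∀ s t : ℝ, 0 < s → s ≤ t → (∀ u, u ∈ Set.Icc s t → 0 < deriv a u) →
      (deriv a s)⁻¹ ≤ (deriv a t)⁻¹ + ∫ x in s..t, (a x)⁻¹ := by
    intro s t hs hst hpos
    have hsub : Set.Icc s t ⊆ Set.Ioi 0 := fun u hu => lt_of_lt_of_le hs hu.1
    have hcinv' : ContinuousOn (fun x => (a x)⁻¹) (Set.Icc s t) := hcinv.mono hsub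
    have hint : IntegrableOn (fun x => (a x)⁻¹) (Set.Icc s t) :=
      hcinv'.integrableOn_compact isCompact_Icc
    set F : ℝ → ℝ := fun u => (deriv a u)⁻¹ + ∫ x in s..u, (a x)⁻¹ with hF
    have hmonoF : MonotoneOn F (Set.Icc s t) := by
      apply monotoneOn_of_deriv_nonneg (convex_Icc s t)
      · apply ContinuousOn.add
        · exact ((hcontd.mono hsub).inv₀ fun u hu => (hpos u hu).ne')
        · have hc := intervalIntegral.continuousOn_primitive (μ := volume)
            (f := fun x => (a x)⁻¹) (a := s) (b := t) hint
          exact hc.congr fun u hu => intervalIntegral.integral_of_le hu.1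
      · intro x hx
        rw [interior_Icc] at hx
        have hx0 : 0 < x := lt_trans hs hx.1
        have hxm : x ∈ Set.Icc s t := ⟨hx.1.le, hx.2.le⟩
        have h1 : HasDerivAt (fun u => (deriv a u)⁻¹)
            (-(deriv (deriv a) x) / (deriv a x) ^ 2) x :=
          (hda2 x hx0).inv (hpos x hxm).ne'
        have h2 : HasDerivAt (fun u => ∫ y in s..u, (a y)⁻¹) ((a x)⁻¹) x := by
          apply intervalIntegral.integral_hasDerivAt_right
          · have hsub2 : Set.uIcc s x ⊆ Set.Icc s t := by
              rw [Set.uIcc_of_le hx.1.le]; exact Set.Icc_subset_Icc le_rfl hx.2.le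
            exact (hint.mono_set hsub2).intervalIntegrable
          · exact hcinv.stronglyMeasurableAtFilter isOpen_Ioi x hx0
          · exact hcinv.continuousAt (isOpen_Ioi.mem_nhds hx0)
        exact ((h1.add h2).differentiableAt).differentiableWithinAt
      · intro x hx
        rw [interior_Icc] at hx
        have hx0 : 0 < x := lt_trans hs hx.1
        have hxm : x ∈ Set.Icc s t := ⟨hx.1.le, hx.2.le⟩
        have h1 : HasDerivAt (fun u => (deriv a u)⁻¹)
            (-(deriv (deriv a) x) / (deriv a x) ^ 2) x :=
          (hda2 x hx0).inv (hpos x hxm).ne'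
        have h2 : HasDerivAt (fun u => ∫ y in s..u, (a y)⁻¹) ((a x)⁻¹) x := by
          apply intervalIntegral.integral_hasDerivAt_right
          · have hsub2 : Set.uIcc s x ⊆ Set.Icc s t := by
              rw [Set.uIcc_of_le hx.1.le]; exact Set.Icc_subset_Icc le_rfl hx.2.le
            exact (hint.mono_set hsub2).intervalIntegrable
          · exact hcinv.stronglyMeasurableAtFilter isOpen_Ioi x hx0
          · exact hcinv.continuousAt (isOpen_Ioi.mem_nhds hx0)
        rw [show deriv F x = _ from (h1.add h2).deriv]
        have hp : 0 < a x := hapos x hx0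
        have hq : 0 < (deriv a x) ^ 2 := pow_pos (hpos x hxm) 2
        have hpr : a x * deriv (deriv a) x ≤ (deriv a x) ^ 2 :=
          (div_le_one hq).1 (hreg x hx0)
        have h3 : deriv (deriv a) x / (deriv a x) ^ 2 ≤ 1 / a x := by
          rw [div_le_div_iff₀ hq hp]; linarith
        have h4 : (a x)⁻¹ = 1 / a x := (one_div _).symm
        rw [neg_div]
        linarith
    have := hmonoF (Set.left_mem_Icc.2 hst) (Set.right_mem_Icc.2 hst) hst
    simpa [hF, intervalIntegral.integral_same] using this
  -- strict positivity of the derivative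
  have hdpos : ∀ t : ℝ, 0 < t → 0 < deriv a t := by
    intro t₂ ht₂
    rcases (hdnn t₂ ht₂).lt_or_eq with h | h
    · exact h
    exfalso
    have h0 : deriv a t₂ = 0 := h.symm
    obtain ⟨w, hw, hw'⟩ := exists_hasDerivAt_eq_slope a (deriv a)
      (show t₂ < t₂ + 1 by linarith)
      (hcont.mono (fun u (hu : u ∈ Set.Icc t₂ (t₂+1)) => le_trans ht₂.le hu.1))
      (fun x hx => hda x (lt_trans ht₂ hx.1))
    have hwpos : 0 < deriv a w := by
      rw [hw']
      have := hmono (Set.mem_Ici.2 ht₂.le) (Set.mem_Ici.2 (by linarith : (0:ℝ) ≤ t₂ + 1))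
        (by linarith : t₂ < t₂ + 1)
      apply div_pos <;> linarith
    set S := {u ∈ Set.Icc t₂ w | deriv a u = 0} with hS
    have hSne : S.Nonempty := ⟨t₂, ⟨le_refl _, hw.1.le⟩, h0⟩
    have hSbdd : BddAbove S := ⟨w, fun u hu => hu.1.2⟩
    have hSclosed : IsClosed S := by
      have : S = Set.Icc t₂ w ∩ deriv a ⁻¹' {0} := by
        ext u; simp [hS, Set.mem_setOf_eq, and_comm]
      rw [this]
      exact ContinuousOn.preimage_isClosed_of_isClosed
        (hcontd.mono (fun u (hu : u ∈ Set.Icc t₂ w) => lt_of_lt_of_le ht₂ hu.1))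
        isClosed_Icc isClosed_singleton
    set α := sSup S with hαdef
    have hαS : α ∈ S := hSclosed.csSup_mem hSne hSbdd
    have hα0 : 0 < α := lt_of_lt_of_le ht₂ hαS.1.1
    have hαw : α < w := by
      rcases hαS.1.2.lt_or_eq with h' | h'
      · exact h'
      · exfalso; rw [h'] at hαS; exact hwpos.ne' hαS.2
    have hposint : ∀ u, u ∈ Set.Ioc α w → 0 < deriv a u := by
      intro u hu
      rcases (hdnn u (lt_trans hα0 hu.1)).lt_or_eq with h' | h'
      · exact h'
      · exfalso
        have : u ∈ S := ⟨⟨le_trans hαS.1.1 hu.1.le, hu.2⟩, h'.symm⟩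
        exact absurd (le_csSup hSbdd this) (not_le.2 hu.1)
    set C := (w - α) * (a α)⁻¹ with hC
    have hCnn : 0 ≤ C := mul_nonneg (by linarith) (inv_nonneg.2 (hapos α hα0).le)
    set δ := ((deriv a w)⁻¹ + C + 1)⁻¹ with hδdef
    have hsumpos : 0 < (deriv a w)⁻¹ + C + 1 := by
      have := inv_nonneg.2 hwpos.le; linarith
    have hδ : 0 < δ := inv_pos.2 hsumpos
    have hcα : ContinuousAt (deriv a) α := hcontd.continuousAt (isOpen_Ioi.mem_nhds hα0)
    have htend : Filter.Tendsto (deriv a) (nhds α) (nhds 0) := hαS.2 ▸ hcα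
    have hev : ∀ᶠ u in nhds α, deriv a u < δ := htend.eventually (eventually_lt_nhds hδ)
    obtain ⟨s, hsδ, hsIoo⟩ := (Filter.Eventually.and (hev.filter_mono nhdsWithin_le_nhds)
      (Ioo_mem_nhdsGT_of_mem (Set.mem_Ico.2 ⟨le_refl α, hαw⟩))).exists
    have hspos : 0 < deriv a s := hposint s ⟨hsIoo.1, hsIoo.2.le⟩
    have hks := key s w (lt_trans hα0 hsIoo.1) hsIoo.2.le
      (fun u hu => hposint u ⟨lt_of_lt_of_le hsIoo.1 hu.1, hu.2⟩)
    have hsub : Set.Icc s w ⊆ Set.Ioi 0 := fun u hu =>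
      lt_trans hα0 (lt_of_lt_of_le hsIoo.1 hu.1)
    have hci : ContinuousOn (fun x => (a x)⁻¹) (Set.Icc s w) := hcinv.mono hsub
    have hii : IntervalIntegrable (fun x => (a x)⁻¹) volume s w := by
      have : IntegrableOn (fun x => (a x)⁻¹) (Set.Icc s w) volume :=
        hci.integrableOn_compact isCompact_Icc
      rw [← Set.uIcc_of_le hsIoo.2.le] at this
      exact this.intervalIntegrable
    have hintle : (∫ x in s..w, (a x)⁻¹) ≤ C := by
      have h1 : (∫ x in s..w, (a x)⁻¹) ≤ ∫ x in s..w, (a α)⁻¹ := by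
        apply intervalIntegral.integral_mono_on hsIoo.2.le hii intervalIntegrable_const
        intro x hx
        apply inv_anti₀ (hapos α hα0)
        exact (hmono (Set.mem_Ici.2 hα0.le)
          (Set.mem_Ici.2 (lt_trans hα0 (lt_of_lt_of_le hsIoo.1 hx.1)).le)
          (lt_of_lt_of_le hsIoo.1 hx.1)).le
      have h2 : (∫ x in s..w, (a α)⁻¹) = (w - s) * (a α)⁻¹ := by
        simp [intervalIntegral.integral_const, smul_eq_mul]
      have h3 : (w - s) * (a α)⁻¹ ≤ C := by
        apply mul_le_mul_of_nonneg_right _ (inv_nonneg.2 (hapos α hα0).le)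
        linarith [hsIoo.1]
      linarith
    have hbig : (deriv a w)⁻¹ + C + 1 ≤ (deriv a s)⁻¹ := by
      have h1 : δ⁻¹ < (deriv a s)⁻¹ := by
        simpa [one_div] using one_div_lt_one_div_of_lt hspos hsδ
      rw [hδdef, inv_inv] at h1
      linarith
    linarith [hks, hintle, inv_nonneg.2 hwpos.le]
  -- the primitive
  set H : ℝ → ℝ := fun t => ∫ x in Set.Ioc 0 t, (a x)⁻¹ with hHdef
  have hHtend : Filter.Tendsto H (nhdsWithin 0 (Set.Ioi 0)) (nhds 0) := by
    have hicc : MeasureTheory.IntegrableOn (fun t => (a t)⁻¹) (Set.Icc 0 τ) := by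
      rwa [integrableOn_Icc_iff_integrableOn_Ioc]
    have hc : ContinuousOn (fun x => ∫ t in Set.Ioc 0 x, (a t)⁻¹) (Set.Icc 0 τ) :=
      intervalIntegral.continuousOn_primitive hicc
    have h0 : (∫ t in Set.Ioc (0:ℝ) 0, (a t)⁻¹) = 0 := by simp
    have hcw : ContinuousWithinAt (fun x => ∫ t in Set.Ioc 0 x, (a t)⁻¹) (Set.Icc 0 τ) 0 :=
      hc 0 (Set.mem_Icc.2 ⟨le_refl 0, hτ.le⟩)
    have h := hcw.tendsto
    rw [h0] at h
    have heq : nhdsWithin (0:ℝ) (Set.Ioc 0 τ) = nhdsWithin 0 (Set.Ioi 0) :=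
      nhdsWithin_Ioc_eq_nhdsGT hτ
    exact heq ▸ (h.mono_left (nhdsWithin_mono 0 Set.Ioc_subset_Icc_self))
  have hbound : ∀ t : ℝ, t ∈ Set.Ioc 0 τ → t / a t ≤ H t := by
    intro t ht
    have hat : 0 < a t := hapos t ht.1
    have h1 : (∫ x in Set.Ioc (0:ℝ) t, (a t)⁻¹) ≤ ∫ x in Set.Ioc (0:ℝ) t, (a x)⁻¹ := by
      apply MeasureTheory.setIntegral_mono_on
      · exact integrableOn_const (by simp [ht.1])
      · exact hpart'.mono_set (Set.Ioc_subset_Ioc le_rfl ht.2)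
      · exact measurableSet_Ioc
      · intro x hx
        have hax : 0 < a x := hapos x hx.1
        have : a x ≤ a t := by
          rcases hx.2.lt_or_eq with h' | h'
          · exact (hmono (Set.mem_Ici.2 hx.1.le) (Set.mem_Ici.2 ht.1.le) h').le
          · rw [h']
        exact inv_anti₀ hax this
    have h2 : (∫ x in Set.Ioc (0:ℝ) t, (a t)⁻¹) = t * (a t)⁻¹ := by
      simp [Real.volume_Ioc, ENNReal.toReal_ofReal ht.1.le, ht.1.le]
    rw [div_eq_mul_inv]
    linarith
  constructor
  · apply tendsto_of_tendsto_of_tendsto_of_le_of_le' tendsto_const_nhds hHtend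
    · filter_upwards [self_mem_nhdsWithin] with t ht
      exact div_nonneg (le_of_lt ht) (hapos t ht).le
    · filter_upwards [Ioc_mem_nhdsGT_of_mem (Set.mem_Ico.2 ⟨le_refl 0, hτ⟩)] with t ht
      exact hbound t ht
  · simp only [one_div]
    rw [NormedAddCommGroup.tendsto_nhds_zero]
    intro ε hε
    have hev : ∀ᶠ t in nhdsWithin (0:ℝ) (Set.Ioi 0), H t < ε / 2 ∧ t ∈ Set.Ioc 0 τ := by
      refine Filter.Eventually.and ?_ ?_
      · exact hHtend.eventually (eventually_lt_nhds (by linarith))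
      · exact Ioc_mem_nhdsGT_of_mem (Set.mem_Ico.2 ⟨le_refl 0, hτ⟩)
    obtain ⟨t₁, hHt₁, ht₁⟩ := hev.exists
    obtain ⟨ξ, hξ, hξ'⟩ := exists_hasDerivAt_eq_slope a (deriv a) ht₁.1
      (hcont.mono (fun u (hu : u ∈ Set.Icc 0 t₁) => hu.1))
      (fun x hx => hda x hx.1)
    have hξτ : ξ ∈ Set.Ioc 0 τ := ⟨hξ.1, le_trans hξ.2.le ht₁.2⟩
    have hξinv : (deriv a ξ)⁻¹ = t₁ / a t₁ := by
      rw [hξ', ha0, sub_zero, sub_zero, inv_div]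
    have hξle : (deriv a ξ)⁻¹ < ε / 2 := by
      rw [hξinv]
      exact lt_of_le_of_lt (hbound t₁ ht₁) hHt₁
    filter_upwards [Ioo_mem_nhdsGT_of_mem (Set.mem_Ico.2 ⟨le_refl 0, hξ.1⟩)] with s hs
    have hk := key s ξ hs.1 hs.2.le (fun u hu => hdpos u (lt_of_lt_of_le hs.1 hu.1))
    have hIle : (∫ x in s..ξ, (a x)⁻¹) ≤ H t₁ := by
      rw [intervalIntegral.integral_of_le hs.2.le]
      apply MeasureTheory.setIntegral_mono_set
        (hpart'.mono_set (Set.Ioc_subset_Ioc le_rfl ht₁.2))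
      · refine (MeasureTheory.ae_restrict_iff' measurableSet_Ioc).2
          (Filter.Eventually.of_forall ?_)
        intro x hx
        exact (inv_nonneg).2 (hapos x hx.1).le
      · exact HasSubset.Subset.eventuallyLE (Set.Ioc_subset_Ioc hs.1.le hξ.2.le)
    have hnn : (0:ℝ) ≤ (deriv a s)⁻¹ := (inv_nonneg).2 (hdpos s hs.1).le
    rw [Real.norm_eq_abs, abs_of_nonneg hnn]
    calc (deriv a s)⁻¹ ≤ (deriv a ξ)⁻¹ + ∫ x in s..ξ, (a x)⁻¹ := hk
      _ ≤ (deriv a ξ)⁻¹ + H t₁ := by linarith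
      _ < ε / 2 + ε / 2 := by linarith
      _ = ε := by ring
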